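/- For every f ∈ H¹(T) (the one-dimensional torus of length 2π), one has ‖∂_y(sin(y)·f(y))‖_{L²} ≥ (1/2)·‖f‖_{L²}. -/

import Mathlib

set_option maxHeartbeats 1000000


open Real intervalIntegral

/-- For `f ∈ H¹` of the circle `ℝ/2πℤ` (here: a `C¹`, `2π`-periodic function),
one has `‖∂_y (sin y · f)‖_{L²} ≥ (1/2) ‖f‖_{L²}`. -/
theorem deriv_sin_mul_lower_bound (f : ℝ → ℝ) (hf : ContDiff ℝ 1 f)
    (hper : Function.Periodic f (2 * π)) :
    Real.sqrt (∫ y in (0:ℝ)..(2 * π), (deriv (fun t => Real.sin t * f t) y) ^ 2)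
      ≥ (1 / 2) * Real.sqrt (∫ y in (0:ℝ)..(2 * π), (f y) ^ 2) := by
  have hfd : Differentiable ℝ f := hf.differentiable one_ne_zero
  have hf'c : Continuous (deriv f) := hf.continuous_deriv le_rfl
  have hfc : Continuous f := hf.continuous
  have h2π : (0:ℝ) ≤ 2 * π := by positivity
  have hD : ∀ y, HasDerivAt (fun t => Real.sin t * f t)
      (Real.cos y * f y + Real.sin y * deriv f y) y := fun y =>
    (Real.hasDerivAt_sin y).mul (hfd y).hasDerivAt
  set A := ∫ y in (0:ℝ)..(2*π), (Real.sin y * f y)^2 with hA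
  set B := ∫ y in (0:ℝ)..(2*π), (Real.sin y * deriv f y)^2 with hB
  set C := ∫ y in (0:ℝ)..(2*π), (Real.cos y * f y)^2 with hC
  set E := ∫ y in (0:ℝ)..(2*π), (Real.sin y * deriv f y) * (Real.cos y * f y) with hE
  have iA : IntervalIntegrable (fun y => (Real.sin y * f y)^2) MeasureTheory.volume 0 (2*π) :=
    ((Real.continuous_sin.mul hfc).pow 2).intervalIntegrable _ _
  have iB : IntervalIntegrable (fun y => (Real.sin y * deriv f y)^2) MeasureTheory.volume 0 (2*π) :=
    ((Real.continuous_sin.mul hf'c).pow 2).intervalIntegrable _ _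
  have iC : IntervalIntegrable (fun y => (Real.cos y * f y)^2) MeasureTheory.volume 0 (2*π) :=
    ((Real.continuous_cos.mul hfc).pow 2).intervalIntegrable _ _
  have iE : IntervalIntegrable (fun y => (Real.sin y * deriv f y) * (Real.cos y * f y))
      MeasureTheory.volume 0 (2*π) :=
    ((Real.continuous_sin.mul hf'c).mul (Real.continuous_cos.mul hfc)).intervalIntegrable _ _
  -- nonnegativity
  have hA0 : 0 ≤ A := intervalIntegral.integral_nonneg h2π (fun y _ => sq_nonneg _)
  have hB0 : 0 ≤ B := intervalIntegral.integral_nonneg h2π (fun y _ => sq_nonneg _)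
  have hC0 : 0 ≤ C := intervalIntegral.integral_nonneg h2π (fun y _ => sq_nonneg _)
  -- ∫ f² = A + C
  have hF : (∫ y in (0:ℝ)..(2*π), (f y)^2) = A + C := by
    rw [hA, hC, ← intervalIntegral.integral_add iA iC]
    apply intervalIntegral.integral_congr
    intro y _
    simp only
    linear_combination -(f y)^2 * Real.sin_sq_add_cos_sq y
  -- FTC on g = sin·cos·f²
  have hg : ∀ y, HasDerivAt (fun t => Real.sin t * Real.cos t * (f t)^2)
      ((Real.cos y * Real.cos y + Real.sin y * (-Real.sin y)) * (f y)^2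
        + (Real.sin y * Real.cos y) * (((2:ℕ):ℝ) * f y ^ 1 * deriv f y)) y := fun y =>
    ((Real.hasDerivAt_sin y).mul (Real.hasDerivAt_cos y)).mul ((hfd y).hasDerivAt.pow 2)
  have hgcont : Continuous (fun y => (Real.cos y * Real.cos y + Real.sin y * (-Real.sin y)) * (f y)^2
        + (Real.sin y * Real.cos y) * (((2:ℕ):ℝ) * f y ^ 1 * deriv f y)) := by
    continuity
  have hgint : (∫ y in (0:ℝ)..(2*π),
      ((Real.cos y * Real.cos y + Real.sin y * (-Real.sin y)) * (f y)^2
        + (Real.sin y * Real.cos y) * (((2:ℕ):ℝ) * f y ^ 1 * deriv f y))) = 0 := by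
    rw [intervalIntegral.integral_eq_sub_of_hasDerivAt (fun y _ => hg y)
      (hgcont.intervalIntegrable _ _)]
    simp [Real.sin_two_pi]
  -- main identity : ∫ (deriv (sin·f))² = A + B
  have hI : (∫ y in (0:ℝ)..(2*π), (deriv (fun t => Real.sin t * f t) y)^2) = A + B := by
    have h1 : (∫ y in (0:ℝ)..(2*π), (deriv (fun t => Real.sin t * f t) y)^2)
        = ∫ y in (0:ℝ)..(2*π), (((Real.sin y * f y)^2 + (Real.sin y * deriv f y)^2)
          + ((Real.cos y * Real.cos y + Real.sin y * (-Real.sin y)) * (f y)^2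
            + (Real.sin y * Real.cos y) * (((2:ℕ):ℝ) * f y ^ 1 * deriv f y))) := by
      apply intervalIntegral.integral_congr
      intro y _
      simp only [(hD y).deriv]
      push_cast
      ring
    rw [h1, intervalIntegral.integral_add (iA.add iB) (hgcont.intervalIntegrable _ _),
      intervalIntegral.integral_add iA iB, hgint, add_zero]
  -- 2E = A - C
  have hEAC : 2 * E = A - C := by
    have h2 : (∫ y in (0:ℝ)..(2*π),
        ((Real.cos y * Real.cos y + Real.sin y * (-Real.sin y)) * (f y)^2
          + (Real.sin y * Real.cos y) * (((2:ℕ):ℝ) * f y ^ 1 * deriv f y)))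
        = ∫ y in (0:ℝ)..(2*π), (((Real.cos y * f y)^2 - (Real.sin y * f y)^2)
          + 2 * ((Real.sin y * deriv f y) * (Real.cos y * f y))) := by
      apply intervalIntegral.integral_congr
      intro y _
      push_cast
      ring
    rw [h2, intervalIntegral.integral_add (iC.sub iA) (iE.const_mul 2),
      intervalIntegral.integral_sub iC iA, intervalIntegral.integral_const_mul] at hgint
    rw [hE]
    linarith [hgint]
  -- Cauchy-Schwarz : C·E² ≤ C²·B
  have hCS : C * E^2 ≤ C^2 * B := by
    have h0 : 0 ≤ ∫ y in (0:ℝ)..(2*π),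
        (C * (Real.sin y * deriv f y) - E * (Real.cos y * f y))^2 :=
      intervalIntegral.integral_nonneg h2π (fun y _ => sq_nonneg _)
    have hexp : (∫ y in (0:ℝ)..(2*π),
        (C * (Real.sin y * deriv f y) - E * (Real.cos y * f y))^2)
        = C^2 * B - 2*C*E * E + E^2 * C := by
      have h3 : (∫ y in (0:ℝ)..(2*π),
          (C * (Real.sin y * deriv f y) - E * (Real.cos y * f y))^2)
          = ∫ y in (0:ℝ)..(2*π), (C^2 * (Real.sin y * deriv f y)^2
            - (2*C*E) * ((Real.sin y * deriv f y) * (Real.cos y * f y))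
            + E^2 * (Real.cos y * f y)^2) := by
        apply intervalIntegral.integral_congr
        intro y _
        ring
      rw [h3, intervalIntegral.integral_add ((iB.const_mul _).sub (iE.const_mul _))
        (iC.const_mul _), intervalIntegral.integral_sub (iB.const_mul _) (iE.const_mul _),
        intervalIntegral.integral_const_mul, intervalIntegral.integral_const_mul,
        intervalIntegral.integral_const_mul]
    rw [hexp] at h0
    nlinarith [h0]
  -- conclude A + B ≥ (A + C)/4
  clear_value A B C E
  have hfinal : (A + C)/4 ≤ A + B := by
    rcases eq_or_lt_of_le hC0 with hC | hC
    · nlinarith [hA0, hB0]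
    · have hE' : E = (A - C)/2 := by linarith
      have hCS' : C * (A-C)^2 / 4 ≤ C^2 * B := by
        rw [hE'] at hCS; nlinarith [hCS]
      have h4 : (A-C)^2 ≤ 4*(C*B) := by
        have := (mul_le_mul_iff_right₀ hC).mp (show C * (A-C)^2 ≤ C * (4*(C*B)) by nlinarith [hCS'])
        exact this
      nlinarith [h4, hC, sq_nonneg A, mul_nonneg hA0 hC.le]
  rw [ge_iff_le, hI, hF]
  calc (1/2) * Real.sqrt (A + C) = Real.sqrt ((A+C)/4) := by
        rw [show (A+C)/4 = (1/2)^2 * (A+C) by ring, Real.sqrt_mul (by positivity),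
          Real.sqrt_sq (by norm_num)]
    _ ≤ Real.sqrt (A + B) := Real.sqrt_le_sqrt hfinal
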